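/- A reaction network G has the siphon/P-semiflow property if and only if G has no drainable siphons and no self-replicable siphons. -/

import Mathlib

/-- A reaction network: a finite set of species, a finite set of complexes
(nonnegative vectors supported on the species), and a finite set of reactions
(a digraph on the complexes with no self-loops), such that every complex takes
part in some reaction and every species is part of some complex. -/
structure RN (ι : Type) where
  species : Finset ι
  complexes : Finset (ι → ℝ)
  reactions : Finset ((ι → ℝ) × (ι → ℝ))
  complexes_nonneg : ∀ y ∈ complexes, ∀ i, 0 ≤ y i
  complexes_supp : ∀ y ∈ complexes, ∀ i, y i ≠ 0 → i ∈ species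
  react_mem_fst : ∀ r ∈ reactions, r.1 ∈ complexes
  react_mem_snd : ∀ r ∈ reactions, r.2 ∈ complexes
  no_loops : ∀ r ∈ reactions, r.1 ≠ r.2
  complexes_used : ∀ y ∈ complexes, ∃ r ∈ reactions, r.1 = y ∨ r.2 = y
  species_used : ∀ i ∈ species, ∃ y ∈ complexes, y i ≠ 0

namespace RN

variable {ι : Type}

/-- A siphon: a nonempty set of species such that every reaction having a
product species in it also has a reactant species in it. -/
def IsSiphon (G : RN ι) (T : Set ι) : Prop :=
  T.Nonempty ∧ T ⊆ ↑G.species ∧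
    ∀ r ∈ G.reactions, (∃ i ∈ T, 0 < r.2 i) → ∃ i ∈ T, 0 < r.1 i

/-- A minimal siphon: a siphon not properly containing any other siphon. -/
def MinimalSiphon (G : RN ι) (T : Set ι) : Prop :=
  G.IsSiphon T ∧ ∀ T' : Set ι, G.IsSiphon T' → T' ⊆ T → T' = T

/-- A nonempty set of species is drainable if some finite sequence of reactions
(with repetitions allowed) strictly decreases every one of its coordinates. -/
def Drainable (G : RN ι) (T : Set ι) : Prop :=
  T.Nonempty ∧ T ⊆ ↑G.species ∧
    ∃ L : List ((ι → ℝ) × (ι → ℝ)), (∀ r ∈ L, r ∈ G.reactions) ∧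
      ∀ i ∈ T, (L.map (fun r => r.2 i - r.1 i)).sum < 0

/-- A nonempty set of species is self-replicable if some finite sequence of
reactions (with repetitions allowed) strictly increases every one of its
coordinates. -/
def SelfReplicable (G : RN ι) (T : Set ι) : Prop :=
  T.Nonempty ∧ T ⊆ ↑G.species ∧
    ∃ L : List ((ι → ℝ) × (ι → ℝ)), (∀ r ∈ L, r ∈ G.reactions) ∧
      ∀ i ∈ T, 0 < (L.map (fun r => r.2 i - r.1 i)).sum

/-- A P-semiflow: a nonzero nonnegative vector supported on the species with
ωᵀN = 0, i.e. ω · (y' - y) = 0 for every reaction y → y'. -/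
def IsPSemiflow (G : RN ι) (ω : ι → ℝ) : Prop :=
  (∀ i, 0 ≤ ω i) ∧ (∀ i, ω i ≠ 0 → i ∈ G.species) ∧ ω ≠ 0 ∧
    ∀ r ∈ G.reactions, ∑ i ∈ G.species, ω i * (r.2 i - r.1 i) = 0

/-- The siphon/P-semiflow property: every siphon contains the support of a
P-semiflow. -/
def SiphonPSemiflowProperty (G : RN ι) : Prop :=
  ∀ T : Set ι, G.IsSiphon T → ∃ ω : ι → ℝ, G.IsPSemiflow ω ∧ {i | 0 < ω i} ⊆ T

/-- Consistency: there is a strictly positive T-semiflow, i.e. strictly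
positive reaction weights v with N v = 0. -/
def Consistent (G : RN ι) : Prop :=
  ∃ v : ((ι → ℝ) × (ι → ℝ)) → ℝ, (∀ r ∈ G.reactions, 0 < v r) ∧
    ∀ i : ι, ∑ r ∈ G.reactions, v r * (r.2 i - r.1 i) = 0

/-- Conservativity: there is a strictly positive conservation law ω ≫ 0 with
ωᵀN = 0. -/
def Conservative (G : RN ι) : Prop :=
  ∃ ω : ι → ℝ, (∀ i ∈ G.species, 0 < ω i) ∧
    ∀ r ∈ G.reactions, ∑ i ∈ G.species, ω i * (r.2 i - r.1 i) = 0

/-- A directed reaction path from `y` to `y'` all of whose non-endpoint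
complexes lie in the set `A`. -/
def PathThrough (G : RN ι) (A : Set (ι → ℝ)) (y y' : ι → ℝ) : Prop :=
  ∃ L : List (ι → ℝ), (∀ z ∈ L, z ∈ A) ∧
    List.Chain (fun a b => (a, b) ∈ G.reactions) y (L ++ [y'])

end RN

variable {ι : Type}

/-- The complex consisting of the single species `j` (with unit coefficient),
for `j` in the given set. -/
def InterCplx [DecidableEq ι] (Y : Finset ι) (z : ι → ℝ) : Prop :=
  ∃ j ∈ Y, z = Pi.single j 1

/-- The complex `z` is supported off the set `Y`. -/
def OffSet (Y : Finset ι) (z : ι → ℝ) : Prop := ∀ j ∈ Y, z j = 0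

namespace RN

/-- `Y` is a set of intermediate species of `G`: (I1) every complex is either
supported off `Y` or equals a single species of `Y` with unit coefficient;
(I2) every `Y`-complex is connected to non-intermediate complexes by directed
reaction paths, in both directions, all of whose non-endpoints are
intermediates. -/
def IsIntermediateSet [DecidableEq ι] (G : RN ι) (Y : Finset ι) : Prop :=
  Y.Nonempty ∧ Y ⊆ G.species ∧
    (∀ y ∈ G.complexes, OffSet Y y ∨ InterCplx Y y) ∧
    (∀ j ∈ Y, ∃ y ∈ G.complexes, ∃ y' ∈ G.complexes, OffSet Y y ∧ OffSet Y y' ∧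
      G.PathThrough {z | InterCplx Y z} y (Pi.single j 1) ∧
      G.PathThrough {z | InterCplx Y z} (Pi.single j 1) y')

/-- `G'` is the reduction of `G` by removal of the set of intermediates `Y`:
its reactions are exactly the pairs `y → y'` of distinct non-intermediate
complexes of `G` joined by a directed reaction path all of whose non-endpoints
are intermediates (in particular all reactions of `G` between non-intermediate
complexes). -/
def IsIntermediateReduction [DecidableEq ι] (G : RN ι) (Y : Finset ι) (G' : RN ι) : Prop :=
  ∀ p : (ι → ℝ) × (ι → ℝ), p ∈ G'.reactions ↔
    (p.1 ∈ G.complexes ∧ p.2 ∈ G.complexes ∧ OffSet Y p.1 ∧ OffSet Y p.2 ∧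
      p.1 ≠ p.2 ∧ G.PathThrough {z | InterCplx Y z} p.1 p.2)

end RN

/-- The projection of a complex onto the coordinates outside `E` (the
coordinates in `E` are set to zero). -/
def projOff [DecidableEq ι] (E : Finset ι) (y : ι → ℝ) : ι → ℝ :=
  fun i => if i ∈ E then 0 else y i

namespace RN

/-- `E` is a set of catalysts of `G`, with `GE` the subnetwork of `G` implied
by `E`: (C1) every reaction either leaves the `E`-coordinates untouched or is
supported entirely in `E`; `GE` consists of the reactions of `G` involving
only species of `E`; and (C2) `GE` has no drainable and no self-replicable
siphons. -/
def IsCatalystSet (G GE : RN ι) (E : Finset ι) : Prop :=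
  E.Nonempty ∧ E ⊆ G.species ∧
    (∀ r ∈ G.reactions, (∀ i ∈ E, r.1 i = r.2 i) ∨ (∀ i, i ∉ E → r.1 i = 0 ∧ r.2 i = 0)) ∧
    (∀ p : (ι → ℝ) × (ι → ℝ), p ∈ GE.reactions ↔
      (p ∈ G.reactions ∧ (∀ i, p.1 i ≠ 0 → i ∈ E) ∧ (∀ i, p.2 i ≠ 0 → i ∈ E))) ∧
    (∀ T : Set ι, GE.IsSiphon T → ¬ GE.Drainable T ∧ ¬ GE.SelfReplicable T)

/-- `G'` is the reduction of `G` by removal of the set of catalysts `E`: its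
reactions are the projections off `E` of those reactions of `G` at least one
of whose projected sides is nonzero. -/
def IsCatalystReduction [DecidableEq ι] (G : RN ι) (E : Finset ι) (G' : RN ι) : Prop :=
  ∀ p : (ι → ℝ) × (ι → ℝ), p ∈ G'.reactions ↔
    ∃ r ∈ G.reactions, p = (projOff E r.1, projOff E r.2) ∧
      (projOff E r.1 ≠ 0 ∨ projOff E r.2 ≠ 0)

/-- A monomolecular network: every complex is either zero or a single species
with unit coefficient. -/
def Monomolecular [DecidableEq ι] (G : RN ι) : Prop :=
  ∀ y ∈ G.complexes, y = 0 ∨ ∃ i ∈ G.species, y = Pi.single i 1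

end RN


lemma pi_expand {σ : Type} [Fintype σ] [DecidableEq σ] (f : (σ → ℝ) →L[ℝ] ℝ) (x : σ → ℝ) :
    f x = ∑ i, x i * f (Pi.single i 1) := by
  conv_lhs => rw [← Finset.univ_sum_single x]
  rw [map_sum]
  refine Finset.sum_congr rfl fun i _ => ?_
  have h1 : Pi.single i (x i) = x i • (Pi.single i 1 : σ → ℝ) := by
    rw [← Pi.single_smul, smul_eq_mul, mul_one]
  rw [h1, map_smul, smul_eq_mul]

lemma gordan {σ θ : Type} [Fintype σ] (F : Finset θ) (c : θ → σ → ℝ) (Tset : Set σ)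
    (h : ¬ ∃ lam : θ → ℝ, (∀ j ∈ F, 0 ≤ lam j) ∧ ∀ i ∈ Tset, 0 < ∑ j ∈ F, lam j * c j i) :
    ∃ ω : σ → ℝ, (∀ i, 0 ≤ ω i) ∧ ω ≠ 0 ∧ (∀ i, ω i ≠ 0 → i ∈ Tset) ∧
      ∀ j ∈ F, ∑ i, ω i * c j i ≤ 0 := by
  classical
  set s : Set (σ → ℝ) := {x | ∀ i ∈ Tset, 0 < x i} with hs_def
  set t : Set (σ → ℝ) :=
    {x | ∃ lam : θ → ℝ, (∀ j ∈ F, 0 ≤ lam j) ∧ x = ∑ j ∈ F, lam j • c j} with ht_def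
  have hs_conv : Convex ℝ s := by
    intro x hx y hy a b ha hb hab
    intro i hi
    have hx' := hx i hi
    have hy' := hy i hi
    show 0 < a * x i + b * y i
    rcases eq_or_lt_of_le ha with h0 | h0
    · have hb1 : b = 1 := by linarith
      rw [← h0, hb1]; simpa using hy'
    · have h2 : 0 ≤ b * y i := mul_nonneg hb hy'.le
      have h3 : 0 < a * x i := mul_pos h0 hx'
      linarith
  have hs_open : IsOpen s := by
    have : s = ⋂ i ∈ Tset, {x : σ → ℝ | 0 < x i} := by
      ext x; simp [hs_def, Set.mem_iInter]
    rw [this]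
    exact Set.Finite.isOpen_biInter (Set.toFinite _)
      (fun i _ => isOpen_lt continuous_const (continuous_apply i))
  have ht_conv : Convex ℝ t := by
    rintro x ⟨lx, hlx, rfl⟩ y ⟨ly, hly, rfl⟩ a b ha hb hab
    refine ⟨fun j => a * lx j + b * ly j, fun j hj =>
      add_nonneg (mul_nonneg ha (hlx j hj)) (mul_nonneg hb (hly j hj)), ?_⟩
    rw [Finset.smul_sum, Finset.smul_sum, ← Finset.sum_add_distrib]
    refine Finset.sum_congr rfl fun j _ => ?_
    rw [add_smul, smul_smul, smul_smul]
  have hdisj : Disjoint s t := by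
    rw [Set.disjoint_left]
    rintro x hx ⟨lam, hlam, rfl⟩
    exact h ⟨lam, hlam, fun i hi => by
      have := hx i hi
      simpa [Finset.sum_apply, Pi.smul_apply, smul_eq_mul] using this⟩
  obtain ⟨f, u, hfs, hft⟩ := geometric_hahn_banach_open hs_conv hs_open ht_conv hdisj
  set e : σ → σ → ℝ := fun i => Pi.single i 1 with he_def
  set onev : σ → ℝ := fun _ => 1 with honev_def
  have h1s : onev ∈ s := fun i _ => one_pos
  have h0t : (0 : σ → ℝ) ∈ t := ⟨0, fun j _ => le_rfl, by simp⟩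
  have hu0 : u ≤ 0 := by simpa using hft 0 h0t
  have hf1 : f onev < u := hfs _ h1s
  set d : σ → ℝ := fun i => f (e i) with hd_def
  have hmem : ∀ (i : σ) (τ : ℝ), (i ∈ Tset → 0 ≤ τ) →
      ((onev + τ • e i)) ∈ s := by
    intro i τ hτ i' hi'
    show 0 < ((onev + τ • e i)) i'
    have heq : ((onev + τ • e i)) i' = 1 + τ * (e i i') := rfl
    rw [heq, he_def]
    simp only [Pi.single_apply]
    by_cases hii : i' = i
    · subst hii
      have := hτ hi'
      simp only [if_true, mul_one]
      linarith
    · simp [hii]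
  have hval : ∀ (i : σ) (τ : ℝ),
      f ((onev + τ • e i)) = f onev + τ * d i := by
    intro i τ
    rw [map_add, map_smul, smul_eq_mul]
  have hd_zero : ∀ i, i ∉ Tset → d i = 0 := by
    intro i hi
    by_contra hd
    have hcalc := hfs _ (hmem i ((u - f onev) / d i) (fun h => absurd h hi))
    rw [hval, div_mul_cancel₀ _ hd] at hcalc
    linarith
  have hd_nonpos : ∀ i, i ∈ Tset → d i ≤ 0 := by
    intro i hi
    by_contra hd
    push_neg at hd
    have hτ : 0 ≤ (u - f onev) / d i := div_nonneg (by linarith) hd.le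
    have hcalc := hfs _ (hmem i _ (fun _ => hτ))
    rw [hval, div_mul_cancel₀ _ hd.ne'] at hcalc
    linarith
  have hcol : ∀ j ∈ F, 0 ≤ f (c j) := by
    intro j hj
    by_contra hfc
    push_neg at hfc
    set τ := (u - 1) / f (c j) with hτ_def
    have hτ : 0 ≤ τ := div_nonneg_of_nonpos (by linarith) hfc.le
    have htmem : τ • c j ∈ t := by
      refine ⟨fun j' => if j' = j then τ else 0, fun j' _ => by dsimp only; split <;> simp [hτ], ?_⟩
      have : ∑ j' ∈ F, (if j' = j then τ else 0) • c j' = τ • c j := by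
        simp only [ite_smul, zero_smul]
        rw [Finset.sum_ite_eq' F j (fun j' => τ • c j'), if_pos hj]
      rw [← this]
    have := hft _ htmem
    rw [map_smul, smul_eq_mul, hτ_def, div_mul_cancel₀ _ hfc.ne] at this
    linarith
  refine ⟨fun i => -d i, ?_, ?_, ?_, ?_⟩
  · intro i
    by_cases hi : i ∈ Tset
    · simpa using hd_nonpos i hi
    · simp [hd_zero i hi]
  · intro hzero
    have hdz : ∀ i, d i = 0 := by
      intro i
      have := congrFun hzero i
      simpa [neg_eq_zero] using this
    have : f onev = 0 := by
      rw [pi_expand f onev]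
      simp only [honev_def, one_mul]
      rw [Finset.sum_congr rfl (fun i _ => show f (Pi.single i 1) = 0 from hdz i)]
      simp
    linarith
  · intro i hne
    by_contra hi
    exact hne (by simp [hd_zero i hi])
  · intro j hj
    have hexp : f (c j) = ∑ i, c j i * d i := pi_expand f (c j)
    have heq : ∑ i, -d i * c j i = -∑ i, c j i * d i := by
      rw [← Finset.sum_neg_distrib]
      exact Finset.sum_congr rfl fun i _ => by ring
    rw [heq, ← hexp]
    simpa using hcol j hj


lemma list_flatMap_sum {θ : Type} (n : θ → ℕ) (g : θ → ℝ) (l : List θ) :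
    ((l.flatMap fun j => List.replicate (n j) j).map g).sum
      = (l.map fun j => (n j : ℝ) * g j).sum := by
  induction l with
  | nil => simp
  | cons a l ih =>
      simp [List.flatMap_cons, ih, List.map_replicate, List.sum_replicate, nsmul_eq_mul]

lemma exists_list_of_nat_coeffs {θ : Type} (F : Finset θ) (n : θ → ℕ) :
    ∃ L : List θ, (∀ r ∈ L, r ∈ F) ∧
      ∀ g : θ → ℝ, (L.map g).sum = ∑ j ∈ F, (n j : ℝ) * g j := by
  classical
  refine ⟨F.toList.flatMap fun j => List.replicate (n j) j, ?_, ?_⟩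
  · intro r hr
    rw [List.mem_flatMap] at hr
    obtain ⟨a, ha, hra⟩ := hr
    rw [List.eq_of_mem_replicate hra]
    exact Finset.mem_toList.1 ha
  · intro g
    rw [list_flatMap_sum, Finset.sum_map_toList]

lemma real_implies_list {ι θ : Type} (F : Finset θ) (T : Set ι) (hTfin : T.Finite)
    (hTne : T.Nonempty) (c : θ → ι → ℝ) (lam : θ → ℝ) (hl : ∀ j ∈ F, 0 ≤ lam j)
    (hneg : ∀ i ∈ T, ∑ j ∈ F, lam j * c j i < 0) :
    ∃ L : List θ, (∀ r ∈ L, r ∈ F) ∧ ∀ i ∈ T, (L.map fun j => c j i).sum < 0 := by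
  classical
  set lam' : θ → ℝ := fun j => if j ∈ F then lam j else 0 with hlam'_def
  have hl' : ∀ j, 0 ≤ lam' j := by
    intro j; simp only [hlam'_def]; split
    · exact hl j (by assumption)
    · exact le_rfl
  have hlam'eq : ∀ i : ι, ∑ j ∈ F, lam' j * c j i = ∑ j ∈ F, lam j * c j i := by
    intro i
    exact Finset.sum_congr rfl fun j hj => by rw [hlam'_def]; simp [if_pos hj]
  set TF := hTfin.toFinset with hTF_def
  have hTFne : TF.Nonempty := by
    rwa [hTF_def, Set.Finite.toFinset_nonempty]
  set g : ι → ℝ := fun i => ∑ j ∈ F, lam j * c j i with hg_def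
  set δ := TF.inf' hTFne (fun i => -(g i)) with hδ_def
  have hδpos : 0 < δ := by
    rw [hδ_def, Finset.lt_inf'_iff]
    intro i hi
    have := hneg i (hTfin.mem_toFinset.1 hi)
    simp only [hg_def]
    linarith
  have hδle : ∀ i ∈ TF, g i ≤ -δ := by
    intro i hi
    have := Finset.inf'_le (fun i => -(g i)) hi
    rw [← hδ_def] at this
    linarith
  set B := ∑ i ∈ TF, ∑ j ∈ F, |c j i| with hB_def
  have hB0 : 0 ≤ B :=
    Finset.sum_nonneg fun i _ => Finset.sum_nonneg fun j _ => abs_nonneg _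
  have hBi : ∀ i ∈ TF, ∑ j ∈ F, |c j i| ≤ B := by
    intro i hi
    exact Finset.single_le_sum (f := fun i => ∑ j ∈ F, |c j i|)
      (fun i _ => Finset.sum_nonneg fun j _ => abs_nonneg _) hi
  set ε : ℝ := δ / (2 * (B + 1)) with hε_def
  have hεpos : 0 < ε := by rw [hε_def]; positivity
  have hq : ∀ j, ∃ qq : ℚ, lam' j < qq ∧ (qq : ℝ) < lam' j + ε :=
    fun j => exists_rat_btwn (by linarith)
  choose q hq1 hq2 using hq
  have hq0 : ∀ j, 0 ≤ q j := by
    intro j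
    have h1 := hl' j
    have h2 := hq1 j
    have : (0:ℝ) ≤ (q j : ℝ) := by linarith
    exact_mod_cast this
  set N := ∏ j ∈ F, (q j).den with hN_def
  have hNpos : 0 < N := Finset.prod_pos fun j _ => (q j).pos
  set n : θ → ℕ := fun j => (q j).num.toNat * (N / (q j).den) with hn_def
  have hnq : ∀ j ∈ F, (n j : ℝ) = (N : ℝ) * (q j : ℝ) := by
    intro j hj
    have hdvd : (q j).den ∣ N := Finset.dvd_prod_of_mem _ hj
    have hnum : 0 ≤ (q j).num := Rat.num_nonneg.2 (hq0 j)
    have hden : ((q j).den : ℚ) ≠ 0 := by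
      exact_mod_cast (q j).pos.ne'
    have h4 : ((q j).num.toNat : ℚ) = ((q j).num : ℚ) := by
      exact_mod_cast congrArg (Int.cast : ℤ → ℚ) (Int.toNat_of_nonneg hnum)
    have h5 : ((N / (q j).den : ℕ) : ℚ) = (N : ℚ) / ((q j).den : ℚ) :=
      Nat.cast_div hdvd hden
    have hQ : ((n j : ℕ) : ℚ) = (N : ℚ) * (q j) := by
      have : ((n j : ℕ) : ℚ) = ((q j).num.toNat : ℚ) * ((N / (q j).den : ℕ) : ℚ) := by
        rw [hn_def]; push_cast; ring
      rw [this, h4, h5]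
      rw [show ((q j).num : ℚ) * ((N:ℚ) / ((q j).den : ℚ))
            = (((q j).num : ℚ) / ((q j).den : ℚ)) * (N:ℚ) by ring]
      rw [Rat.num_div_den]
      ring
    exact_mod_cast hQ
  obtain ⟨L, hL1, hL2⟩ := exists_list_of_nat_coeffs F n
  refine ⟨L, hL1, fun i hi => ?_⟩
  rw [hL2 (fun j => c j i)]
  have hiTF : i ∈ TF := hTfin.mem_toFinset.2 hi
  have e1 : ∑ j ∈ F, (n j : ℝ) * c j i = (N:ℝ) * ∑ j ∈ F, (q j : ℝ) * c j i := by
    rw [Finset.mul_sum]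
    exact Finset.sum_congr rfl fun j hj => by rw [hnq j hj, mul_assoc]
  have e2 : ∑ j ∈ F, (q j : ℝ) * c j i ≤ g i + ε * B := by
    have step : ∀ j ∈ F, (q j:ℝ) * c j i ≤ lam' j * c j i + ε * |c j i| := by
      intro j hj
      have h2 : ((q j:ℝ) - lam' j) * c j i ≤ ((q j:ℝ) - lam' j) * |c j i| :=
        mul_le_mul_of_nonneg_left (le_abs_self _) (by linarith [hq1 j])
      have h3 : ((q j:ℝ) - lam' j) * |c j i| ≤ ε * |c j i| :=
        mul_le_mul_of_nonneg_right (by linarith [hq2 j]) (abs_nonneg _)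
      nlinarith [h2, h3]
    calc ∑ j ∈ F, (q j : ℝ) * c j i
        ≤ ∑ j ∈ F, (lam' j * c j i + ε * |c j i|) := Finset.sum_le_sum step
      _ = g i + ε * ∑ j ∈ F, |c j i| := by
          rw [Finset.sum_add_distrib, ← Finset.mul_sum, hlam'eq i]
      _ ≤ g i + ε * B := by
          have := hBi i hiTF
          have := mul_le_mul_of_nonneg_left this hεpos.le
          linarith
  have e3 : ε * B < δ := by
    rw [hε_def, div_mul_eq_mul_div, div_lt_iff₀ (by positivity)]
    nlinarith [hδpos, hB0]
  have e4 := hδle i hiTF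
  rw [e1]
  have : ∑ j ∈ F, (q j : ℝ) * c j i < 0 := by linarith
  exact mul_neg_of_pos_of_neg (by exact_mod_cast hNpos) this


section AuxLemmas

lemma finset_list_sum_comm {α θ : Type} (s : Finset α) (L : List θ) (g : α → θ → ℝ) :
    ∑ i ∈ s, (L.map (g i)).sum = (L.map fun r => ∑ i ∈ s, g i r).sum := by
  induction L with
  | nil => simp
  | cons r L ih => simp [Finset.sum_add_distrib, ih]

lemma list_map_neg_sum {θ : Type} (L : List θ) (g : θ → ℝ) :
    (L.map fun r => -(g r)).sum = -(L.map g).sum := by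
  induction L with
  | nil => simp
  | cons r L ih => simp [ih]; ring

lemma semiflow_no_drain {ι : Type} (G : RN ι) (T : Set ι) (ω : ι → ℝ) (hω : G.IsPSemiflow ω)
    (hsupp : {i | 0 < ω i} ⊆ T) : ¬ G.Drainable T ∧ ¬ G.SelfReplicable T := by
  obtain ⟨hω0, hωS, hωne, hωr⟩ := hω
  have hkey : ∀ L : List ((ι → ℝ) × (ι → ℝ)), (∀ r ∈ L, r ∈ G.reactions) →
      ∑ i ∈ G.species, ω i * (L.map fun r => r.2 i - r.1 i).sum = 0 := by
    intro L hL
    have h1 : ∀ i, ω i * (L.map fun r => r.2 i - r.1 i).sum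
        = (L.map fun r => ω i * (r.2 i - r.1 i)).sum :=
      fun i => (List.sum_map_mul_left _ _ _).symm
    rw [Finset.sum_congr rfl (fun i _ => h1 i), finset_list_sum_comm]
    apply List.sum_eq_zero
    intro x hx
    rw [List.mem_map] at hx
    obtain ⟨r, hr, rfl⟩ := hx
    exact hωr r (hL r hr)
  obtain ⟨i₀, hi₀⟩ : ∃ i, ω i ≠ 0 := by
    by_contra h; push_neg at h; exact hωne (funext h)
  have hi₀pos : 0 < ω i₀ := lt_of_le_of_ne (hω0 i₀) (Ne.symm hi₀)
  have hi₀S : i₀ ∈ G.species := hωS i₀ hi₀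
  have hi₀T : i₀ ∈ T := hsupp hi₀pos
  constructor
  · rintro ⟨-, -, L, hL, hLneg⟩
    have h0 := hkey L hL
    have hlt : ∑ i ∈ G.species, ω i * (L.map fun r => r.2 i - r.1 i).sum
        < ∑ _i ∈ G.species, (0:ℝ) := by
      apply Finset.sum_lt_sum
      · intro i _hi
        rcases eq_or_lt_of_le (hω0 i) with h | h
        · rw [← h]; simp
        · exact (mul_neg_of_pos_of_neg h (hLneg i (hsupp h))).le
      · exact ⟨i₀, hi₀S, mul_neg_of_pos_of_neg hi₀pos (hLneg i₀ hi₀T)⟩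
    rw [Finset.sum_const, smul_zero] at hlt
    linarith
  · rintro ⟨-, -, L, hL, hLpos⟩
    have h0 := hkey L hL
    have hlt : ∑ _i ∈ G.species, (0:ℝ)
        < ∑ i ∈ G.species, ω i * (L.map fun r => r.2 i - r.1 i).sum := by
      apply Finset.sum_lt_sum
      · intro i _hi
        rcases eq_or_lt_of_le (hω0 i) with h | h
        · rw [← h]; simp
        · exact (mul_pos h (hLpos i (hsupp h))).le
      · exact ⟨i₀, hi₀S, mul_pos hi₀pos (hLpos i₀ hi₀T)⟩
    rw [Finset.sum_const, smul_zero] at hlt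
    linarith

lemma exists_minimal_siphon {ι : Type} (G : RN ι) (T : Set ι) (hT : G.IsSiphon T) :
    ∃ T₀, T₀ ⊆ T ∧ G.IsSiphon T₀ ∧ ∀ T', G.IsSiphon T' → T' ⊆ T₀ → T' = T₀ := by
  classical
  suffices H : ∀ (n : ℕ) (T : Set ι), G.IsSiphon T → ∀ hfin : T.Finite,
      hfin.toFinset.card ≤ n →
      ∃ T₀, T₀ ⊆ T ∧ G.IsSiphon T₀ ∧ ∀ T', G.IsSiphon T' → T' ⊆ T₀ → T' = T₀ by
    have hfin : T.Finite := Set.Finite.subset G.species.finite_toSet hT.2.1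
    exact H hfin.toFinset.card T hT hfin le_rfl
  intro n
  induction n with
  | zero =>
    intro T hT hfin hcard
    exfalso
    obtain ⟨i, hi⟩ := hT.1
    have h1 : i ∈ hfin.toFinset := hfin.mem_toFinset.2 hi
    have h2 := Finset.card_pos.2 ⟨i, h1⟩
    omega
  | succ n ih =>
    intro T hT hfin hcard
    by_cases h : ∃ T', G.IsSiphon T' ∧ T' ⊆ T ∧ T' ≠ T
    · obtain ⟨T', hT', hsub, hne⟩ := h
      have hfin' : T'.Finite := hfin.subset hsub
      have hss : hfin'.toFinset ⊂ hfin.toFinset := by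
        rw [Set.Finite.toFinset_ssubset_toFinset, ssubset_iff_subset_ne]
        exact ⟨hsub, hne⟩
      have hcard' := Finset.card_lt_card hss
      obtain ⟨T₀, h1, h2, h3⟩ := ih T' hT' hfin' (by omega)
      exact ⟨T₀, h1.trans hsub, h2, h3⟩
    · push_neg at h
      exact ⟨T, subset_rfl, hT, fun T' hT' hsub => h T' hT' hsub⟩

end AuxLemmas

/-- Corollary 2: a reaction network has the siphon/P-semiflow property if and
only if it has no drainable siphons and no self-replicable siphons. -/
theorem siphonPSemiflow_iff_no_drainable_or_selfReplicable_siphons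
    {ι : Type} (G : RN ι) :
    G.SiphonPSemiflowProperty ↔
      ∀ T : Set ι, G.IsSiphon T → ¬ G.Drainable T ∧ ¬ G.SelfReplicable T := by
  classical
  constructor
  · intro hprop T hT
    obtain ⟨ω, hω, hsupp⟩ := hprop T hT
    exact semiflow_no_drain G T ω hω hsupp
  · intro hAll T hT
    obtain ⟨T₀, hT₀T, hT₀, hmin⟩ := exists_minimal_siphon G T hT
    set F := G.reactions with hF_def
    have hT₀fin : T₀.Finite := Set.Finite.subset G.species.finite_toSet hT₀.2.1
    have hT₀ne : T₀.Nonempty := hT₀.1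
    have hT₀S : T₀ ⊆ ↑G.species := hT₀.2.1
    set c : ((ι → ℝ) × (ι → ℝ)) → {x // x ∈ G.species} → ℝ :=
      fun r i => r.2 ↑i - r.1 ↑i with hc_def
    set Tset : Set {x // x ∈ G.species} := {i | ↑i ∈ T₀} with hTset_def
    have hg1 : ¬ ∃ lam : ((ι → ℝ) × (ι → ℝ)) → ℝ, (∀ j ∈ F, 0 ≤ lam j) ∧
        ∀ i ∈ Tset, 0 < ∑ j ∈ F, lam j * c j i := by
      rintro ⟨lam, hlam0, hpos⟩
      have hneg : ∀ i ∈ T₀, ∑ j ∈ F, lam j * (j.1 i - j.2 i) < 0 := by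
        intro i hi
        have hiS : i ∈ G.species := hT₀S hi
        have h1 := hpos ⟨i, hiS⟩ hi
        have h2 : ∑ j ∈ F, lam j * (j.1 i - j.2 i)
            = -∑ j ∈ F, lam j * c j ⟨i, hiS⟩ := by
          rw [← Finset.sum_neg_distrib]
          exact Finset.sum_congr rfl fun j _ => by rw [hc_def]; ring
        rw [h2]; linarith
      obtain ⟨L, hL1, hL2⟩ := real_implies_list F T₀ hT₀fin hT₀ne
        (fun j i => j.1 i - j.2 i) lam hlam0 hneg
      refine (hAll T₀ hT₀).2 ⟨hT₀ne, hT₀S, L, hL1, fun i hi => ?_⟩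
      have h3 := hL2 i hi
      have heq : (L.map fun j => j.2 i - j.1 i).sum
          = -(L.map fun j => j.1 i - j.2 i).sum := by
        rw [← list_map_neg_sum]
        congr 1
        exact List.map_congr_left fun r _ => by ring
      rw [heq]; linarith
    obtain ⟨ω₁, hω₁0, hω₁ne, hω₁supp, hω₁le⟩ := gordan F c Tset hg1
    have hKfull : ∀ ω : {x // x ∈ G.species} → ℝ, (∀ i, 0 ≤ ω i) → ω ≠ 0 →
        (∀ i, ω i ≠ 0 → i ∈ Tset) → (∀ j ∈ F, ∑ i, ω i * c j i ≤ 0) →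
        ∀ i : {x // x ∈ G.species}, i ∈ Tset → ω i ≠ 0 := by
      intro ω h0 hne hsupp hle
      set Sω : Set ι := {i : ι | ∃ h : i ∈ G.species, ω ⟨i, h⟩ ≠ 0} with hSω_def
      have hSωsiphon : G.IsSiphon Sω := by
        refine ⟨?_, ?_, ?_⟩
        · obtain ⟨i, hi⟩ : ∃ i, ω i ≠ 0 := by
            by_contra hcon; push_neg at hcon; exact hne (funext hcon)
          exact ⟨↑i, i.2, by rwa [Subtype.coe_eta]⟩
        · rintro i ⟨hiS, -⟩; exact hiS
        · rintro r hr ⟨i, ⟨hiS, hiω⟩, hipos⟩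
          by_contra hno
          push_neg at hno
          have hr1 : ∀ i' : ι, i' ∈ Sω → r.1 i' = 0 := by
            intro i' hi'
            have hnn := G.complexes_nonneg r.1 (G.react_mem_fst r hr) i'
            have h2 := hno i' hi'
            linarith
          have hpos : 0 < ∑ i : {x // x ∈ G.species}, ω i * c r i := by
            apply Finset.sum_pos'
            · intro k _
              by_cases hk : ω k = 0
              · rw [hk, zero_mul]
              · have hkS : (↑k : ι) ∈ Sω := ⟨k.2, by rwa [Subtype.coe_eta]⟩
                have hz := hr1 ↑k hkS
                have hωk : 0 < ω k := lt_of_le_of_ne (h0 k) (Ne.symm hk)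
                have h2nn := G.complexes_nonneg r.2 (G.react_mem_snd r hr) ↑k
                show 0 ≤ ω k * (r.2 ↑k - r.1 ↑k)
                rw [hz, sub_zero]
                exact mul_nonneg hωk.le h2nn
            · refine ⟨⟨i, hiS⟩, Finset.mem_univ _, ?_⟩
              have hz := hr1 i ⟨hiS, hiω⟩
              show 0 < ω ⟨i, hiS⟩ * (r.2 i - r.1 i)
              have hωi : 0 < ω ⟨i, hiS⟩ := lt_of_le_of_ne (h0 _) (Ne.symm hiω)
              rw [hz, sub_zero]
              exact mul_pos hωi hipos
          have h3 := hle r hr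
          linarith
      have hSωsub : Sω ⊆ T₀ := by
        rintro i ⟨hiS, hiω⟩
        exact hsupp ⟨i, hiS⟩ hiω
      have hSωeq : Sω = T₀ := hmin Sω hSωsiphon hSωsub
      intro i hiT
      have hmem : (↑i : ι) ∈ Sω := by rw [hSωeq]; exact hiT
      obtain ⟨h', hω'⟩ := hmem
      rwa [Subtype.coe_eta] at hω'
    by_cases hzero : ∀ j ∈ F, ∑ i, ω₁ i * c j i = 0
    · refine ⟨fun i => if h : i ∈ G.species then ω₁ ⟨i, h⟩ else 0, ⟨?_, ?_, ?_, ?_⟩, ?_⟩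
      · intro i
        by_cases h : i ∈ G.species
        · simp only [dif_pos h]; exact hω₁0 _
        · simp only [dif_neg h]; exact le_rfl
      · intro i hi
        by_contra h
        simp only [dif_neg h] at hi
        exact hi rfl
      · intro hcon
        obtain ⟨i, hi⟩ : ∃ i, ω₁ i ≠ 0 := by
          by_contra hc; push_neg at hc; exact hω₁ne (funext hc)
        have h1 := congrFun hcon ↑i
        simp only [dif_pos i.2, Subtype.coe_eta, Pi.zero_apply] at h1
        exact hi h1
      · intro r hr
        have key : ∑ i ∈ G.species,
            (if h : i ∈ G.species then ω₁ ⟨i, h⟩ else 0) * (r.2 i - r.1 i)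
            = ∑ i ∈ G.species.attach, ω₁ i * (r.2 ↑i - r.1 ↑i) := by
          rw [← Finset.sum_attach G.species
            (fun i => (if h : i ∈ G.species then ω₁ ⟨i, h⟩ else 0) * (r.2 i - r.1 i))]
          refine Finset.sum_congr rfl fun i _ => ?_
          rw [dif_pos i.2, Subtype.coe_eta]
        show ∑ i ∈ G.species,
            (if h : i ∈ G.species then ω₁ ⟨i, h⟩ else 0) * (r.2 i - r.1 i) = 0
        rw [key, ← Finset.univ_eq_attach]
        exact hzero r hr
      · intro i hi
        simp only [Set.mem_setOf_eq] at hi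
        by_cases h : i ∈ G.species
        · simp only [dif_pos h] at hi
          exact hT₀T (hω₁supp ⟨i, h⟩ hi.ne')
        · simp only [dif_neg h] at hi; exact absurd hi (lt_irrefl 0)
    · push_neg at hzero
      obtain ⟨r₀, hr₀F, hr₀ne⟩ := hzero
      have hr₀lt : ∑ i, ω₁ i * c r₀ i < 0 := lt_of_le_of_ne (hω₁le r₀ hr₀F) hr₀ne
      exfalso
      have hg2 : ¬ ∃ lam : ((ι → ℝ) × (ι → ℝ)) → ℝ, (∀ j ∈ F, 0 ≤ lam j) ∧
          ∀ i ∈ Tset, 0 < ∑ j ∈ F, lam j * (-(c j i)) := by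
        rintro ⟨lam, hlam0, hpos⟩
        have hneg : ∀ i ∈ T₀, ∑ j ∈ F, lam j * (j.2 i - j.1 i) < 0 := by
          intro i hi
          have hiS := hT₀S hi
          have h1 := hpos ⟨i, hiS⟩ hi
          have h2 : ∑ j ∈ F, lam j * (-(c j ⟨i, hiS⟩))
              = -∑ j ∈ F, lam j * (j.2 i - j.1 i) := by
            rw [← Finset.sum_neg_distrib]
            exact Finset.sum_congr rfl fun j _ => by rw [hc_def]; ring
          rw [h2] at h1; linarith
        obtain ⟨L, hL1, hL2⟩ := real_implies_list F T₀ hT₀fin hT₀ne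
          (fun j i => j.2 i - j.1 i) lam hlam0 hneg
        exact (hAll T₀ hT₀).1 ⟨hT₀ne, hT₀S, L, hL1, hL2⟩
      obtain ⟨ω₂, hω₂0, hω₂ne, hω₂supp, hω₂le'⟩ := gordan F (fun j i => -(c j i)) Tset hg2
      have hω₂ge : ∀ j ∈ F, 0 ≤ ∑ i, ω₂ i * c j i := by
        intro j hj
        have h1 := hω₂le' j hj
        have heq : ∑ i, ω₂ i * -(c j i) = -∑ i, ω₂ i * c j i := by
          rw [← Finset.sum_neg_distrib]
          exact Finset.sum_congr rfl fun i _ => by ring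
        rw [heq] at h1; linarith
      set sF : Finset {x // x ∈ G.species} := Finset.univ.filter (fun i => ω₂ i ≠ 0)
        with hsF_def
      have hsFne : sF.Nonempty := by
        obtain ⟨i, hi⟩ : ∃ i, ω₂ i ≠ 0 := by
          by_contra hc; push_neg at hc; exact hω₂ne (funext hc)
        exact ⟨i, by simp [hsF_def, hi]⟩
      have hsF2 : ∀ i ∈ sF, 0 < ω₂ i := fun i hi =>
        lt_of_le_of_ne (hω₂0 i) (Ne.symm (by simpa [hsF_def] using hi))
      have hsF1 : ∀ i ∈ sF, 0 < ω₁ i := by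
        intro i hi
        have hiT : i ∈ Tset := hω₂supp i (by simpa [hsF_def] using hi)
        have h1 := hKfull ω₁ hω₁0 hω₁ne hω₁supp hω₁le i hiT
        exact lt_of_le_of_ne (hω₁0 i) (Ne.symm h1)
      set ε := sF.inf' hsFne (fun i => ω₁ i / ω₂ i) with hε_def
      have hεpos : 0 < ε := by
        rw [hε_def, Finset.lt_inf'_iff]
        exact fun i hi => div_pos (hsF1 i hi) (hsF2 i hi)
      have hεle : ∀ i ∈ sF, ε * ω₂ i ≤ ω₁ i := by
        intro i hi
        have h1 := Finset.inf'_le (fun i => ω₁ i / ω₂ i) hi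
        rw [← hε_def] at h1
        rw [← le_div_iff₀ (hsF2 i hi)]
        exact h1
      obtain ⟨istar, histar, hεeq⟩ := Finset.exists_mem_eq_inf' hsFne (fun i => ω₁ i / ω₂ i)
      set ωbar : {x // x ∈ G.species} → ℝ := fun i => ω₁ i - ε * ω₂ i with hωbar_def
      have hωbar0 : ∀ i, 0 ≤ ωbar i := by
        intro i
        by_cases hi : ω₂ i = 0
        · simp only [hωbar_def, hi, mul_zero, sub_zero]
          exact hω₁0 i
        · have hmem : i ∈ sF := by simp [hsF_def, hi]
          have h1 := hεle i hmem
          simp only [hωbar_def]; linarith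
      have hωbar_supp : ∀ i, ωbar i ≠ 0 → i ∈ Tset := by
        intro i hne'
        by_contra hiT
        have h1 : ω₁ i = 0 := by
          by_contra hc; exact hiT (hω₁supp i hc)
        have h2 : ω₂ i = 0 := by
          by_contra hc; exact hiT (hω₂supp i hc)
        exact hne' (by simp [hωbar_def, h1, h2])
      have hωbar_le : ∀ j ∈ F, ∑ i, ωbar i * c j i ≤ 0 := by
        intro j hj
        have heq : ∑ i, ωbar i * c j i
            = ∑ i, ω₁ i * c j i - ε * ∑ i, ω₂ i * c j i := by
          rw [Finset.mul_sum, ← Finset.sum_sub_distrib]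
          exact Finset.sum_congr rfl fun i _ => by simp only [hωbar_def]; ring
        rw [heq]
        have h1 := hω₁le j hj
        have h2 := mul_nonneg hεpos.le (hω₂ge j hj)
        linarith
      have histar_bar : ωbar istar = 0 := by
        have hω2pos := hsF2 istar histar
        have hεeq' : ε = ω₁ istar / ω₂ istar := by rw [hε_def]; exact hεeq
        simp only [hωbar_def, hεeq']
        field_simp
        ring
      have hωbar_zero : ωbar = 0 := by
        by_contra hc
        have h1 := hKfull ωbar hωbar0 hc hωbar_supp hωbar_le istar
          (hω₂supp istar (by simpa [hsF_def] using histar))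
        exact h1 histar_bar
      have hωeq : ∀ i, ω₁ i = ε * ω₂ i := by
        intro i
        have h1 := congrFun hωbar_zero i
        simp only [hωbar_def] at h1
        have h2 : ω₁ i - ε * ω₂ i = 0 := h1
        linarith
      have hfinal : ∑ i, ω₁ i * c r₀ i = ε * ∑ i, ω₂ i * c r₀ i := by
        rw [Finset.mul_sum]
        exact Finset.sum_congr rfl fun i _ => by rw [hωeq i]; ring
      have h2 := mul_nonneg hεpos.le (hω₂ge r₀ hr₀F)
      linarith [hr₀lt]
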